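/- Let ψ : [0,T] × ℝⁿ → ℝ be Lipschitz (for the Euclidean distance) and let X : [0,T] × ℝⁿ → ℝⁿ be such that for a.e. y the curve t ↦ X(t,y) is Lipschitz and satisfies ∂_t X(t,y) = b(t, X(t,y)) for a.e. t, where b is Borel. Then for a.e. y, the map t ↦ ψ(t, X(t,y)) is Lipschitz on [0,T] and for a.e. t its derivative equals (∂_t ψ)(t, X(t,y)) + b(t, X(t,y)) · (∇ψ)(t, X(t,y)), at every (t,y) for which ψ is differentiable at (t, X(t,y)). -/

import Mathlib

open Set MeasureTheory

/-- chain rule along flow trajectories. If `ψ` is Lipschitz and for a.e. `y`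
the curve `t ↦ X(t,y)` is Lipschitz and solves the ODE driven by the Borel field `b`,
then for a.e. `y` the map `t ↦ ψ(t, X(t,y))` is Lipschitz on `[0,T]` and for a.e. `t`,
at every point where `ψ` is differentiable at `(t, X(t,y))`, its derivative equals
`∂_t ψ(t,X(t,y)) + b(t,X(t,y)) · ∇ψ(t,X(t,y))`, i.e. `Dψ(t,X(t,y)) (1, b(t,X(t,y)))`. -/
theorem stmt8 {n : ℕ} (T : ℝ) (hT : 0 < T)
    (ψ : ℝ × EuclideanSpace ℝ (Fin n) → ℝ) (Lψ : NNReal) (hψ : LipschitzWith Lψ ψ)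
    (b : ℝ × EuclideanSpace ℝ (Fin n) → EuclideanSpace ℝ (Fin n)) (hb : Measurable b)
    (X : ℝ → EuclideanSpace ℝ (Fin n) → EuclideanSpace ℝ (Fin n))
    (hX : ∀ᵐ y : EuclideanSpace ℝ (Fin n),
      (∃ LX : NNReal, LipschitzOnWith LX (fun t => X t y) (Icc (0:ℝ) T)) ∧
      ∀ᵐ t ∂(volume.restrict (Icc (0:ℝ) T)),
        HasDerivAt (fun s => X s y) (b (t, X t y)) t) :
    ∀ᵐ y : EuclideanSpace ℝ (Fin n),
      (∃ LC : NNReal, LipschitzOnWith LC (fun t => ψ (t, X t y)) (Icc (0:ℝ) T)) ∧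
      ∀ᵐ t ∂(volume.restrict (Icc (0:ℝ) T)),
        DifferentiableAt ℝ ψ (t, X t y) →
        HasDerivAt (fun s => ψ (s, X s y))
          (fderiv ℝ ψ (t, X t y) (1, b (t, X t y))) t := by
  filter_upwards [hX] with y ⟨⟨LX, hLX⟩, hode⟩
  constructor
  · exact ⟨Lψ * max 1 LX,
      hψ.comp_lipschitzOnWith ((LipschitzWith.id.lipschitzOnWith (s := Icc (0:ℝ) T)).prodMk hLX)⟩
  · filter_upwards [hode] with t ht hdiff
    have h1 : HasDerivAt (fun s : ℝ => (s, X s y)) (1, b (t, X t y)) t :=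
      (hasDerivAt_id t).prodMk ht
    exact (hdiff.hasFDerivAt.comp_hasDerivAt t h1)
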